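/- Consider the symmetric instance with n = m ≥ 1, server rates μ_j = 1 for all j ∈ [n], and arrival rates λ_i = λ ∈ (0,1) for all i ∈ [n], and let p be the uniform profile p_{ij} = 1/n for all i, j. Then [n] is the unique largest-cardinality minimizer of f(· | p) over nonempty subsets of [n], with f([n] | p) = (1 − (1 − 1/n)^n)/λ, the profile p is a Nash equilibrium of the patient queuing game with costs r, and r_i(p) = max{0, 1 − (1 − (1 − 1/n)^n)/λ} for every queue i. In particular, if λ > 1 − (1 − 1/n)^n then every queue has strictly positive cost r_i(p) > 0. -/

import Mathlib

open Finset

/-- Membership of a vector in the probability simplex `Δ^{m-1}`. -/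
def inSimplex {m : ℕ} (q : Fin m → ℝ) : Prop :=
  (∀ j, 0 ≤ q j) ∧ ∑ j, q j = 1

/-- `α(S | p, μ, S')`: expected number of packets cleared by the queues in `S` in one round,
when the queues in `S'` have priority over `S` and `S` has priority over all other queues. -/
noncomputable def alphaQ {n m : ℕ} (p : Fin n → Fin m → ℝ) (μ : Fin m → ℝ)
    (S S' : Finset (Fin n)) : ℝ :=
  ∑ j : Fin m, μ j * (∏ i ∈ S', (1 - p i j)) * (1 - ∏ i ∈ S, (1 - p i j))

/-- `λ(S)`: total arrival rate of the queues in `S`. -/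
def lamQ {n : ℕ} (lam : Fin n → ℝ) (S : Finset (Fin n)) : ℝ :=
  ∑ i ∈ S, lam i

/-- `f(S | p, μ, λ, S') = α(S | p, μ, S') / λ(S)`. -/
noncomputable def fQ {n m : ℕ} (p : Fin n → Fin m → ℝ) (μ : Fin m → ℝ) (lam : Fin n → ℝ)
    (S S' : Finset (Fin n)) : ℝ :=
  alphaQ p μ S S' / lamQ lam S

open scoped Classical in
/-- The union of all nonempty subsets `S ⊆ I` minimizing `f(· | p, μ, λ, S')` over the
nonempty subsets of `I` (the "largest-cardinality minimizer"). -/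
noncomputable def unionMin {n m : ℕ} (p : Fin n → Fin m → ℝ) (μ : Fin m → ℝ) (lam : Fin n → ℝ)
    (I S' : Finset (Fin n)) : Finset (Fin n) :=
  I.powerset.sup fun S =>
    if S.Nonempty ∧ ∀ T ∈ I.powerset, T.Nonempty → fQ p μ lam S S' ≤ fQ p μ lam T S' then S
    else ∅

/-- The group selected by one step of the rate algorithm on remaining queues `I`
with current (already discounted) service rates `μ`. -/
noncomputable def topSet {n m : ℕ} (p : Fin n → Fin m → ℝ) (μ : Fin m → ℝ) (lam : Fin n → ℝ)
    (I : Finset (Fin n)) : Finset (Fin n) :=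
  unionMin p μ lam I ∅

open scoped Classical in
/-- Fuelled version of the recursive rate algorithm: `I` is the set of remaining queues
and `μc` the current (discounted) service rates. -/
noncomputable def rateAux {n m : ℕ} (lam : Fin n → ℝ) (p : Fin n → Fin m → ℝ) :
    ℕ → Finset (Fin n) → (Fin m → ℝ) → Fin n → ℝ
  | 0, _, _, _ => 0
  | fuel + 1, I, μc, i =>
    if ∀ S ∈ I.powerset, S.Nonempty → 1 ≤ fQ p μc lam S ∅ then 0
    else if i ∈ topSet p μc lam I then 1 - fQ p μc lam (topSet p μc lam I) ∅
    else
      rateAux lam p fuel (I \ topSet p μc lam I)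
        (fun j => μc j * ∏ r ∈ topSet p μc lam I, (1 - p r j)) i

/-- The rate function `r : (Δ^{m-1})^n → [0,1]^n` computed by the recursive algorithm:
`rateQ lam μ p i` is the long-run aging rate `r_i(p)` of queue `i`. -/
noncomputable def rateQ {n m : ℕ} (lam : Fin n → ℝ) (μ : Fin m → ℝ)
    (p : Fin n → Fin m → ℝ) (i : Fin n) : ℝ :=
  rateAux lam p (n + 1) Finset.univ μ i

/-- State (remaining queues, discounted service rates) of the rate algorithm after `k` steps. -/
noncomputable def stateQ {n m : ℕ} (lam : Fin n → ℝ) (μ : Fin m → ℝ)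
    (p : Fin n → Fin m → ℝ) : ℕ → Finset (Fin n) × (Fin m → ℝ)
  | 0 => (Finset.univ, μ)
  | k + 1 =>
    ((stateQ lam μ p k).1 \ topSet p (stateQ lam μ p k).2 lam (stateQ lam μ p k).1,
      fun j => (stateQ lam μ p k).2 j *
        ∏ r ∈ topSet p (stateQ lam μ p k).2 lam (stateQ lam μ p k).1, (1 - p r j))

/-- `g_{k+1} = max {0, 1 - f_{k+1}}`: the aging rate of the `(k+1)`st group output by
the rate algorithm (`k = 0` corresponds to `S_1`). -/
noncomputable def gQ {n m : ℕ} (lam : Fin n → ℝ) (μ : Fin m → ℝ)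
    (p : Fin n → Fin m → ℝ) (k : ℕ) : ℝ :=
  max 0 (1 - fQ p (stateQ lam μ p k).2 lam
    (topSet p (stateQ lam μ p k).2 lam (stateQ lam μ p k).1) ∅)

/-- `f* = min_{∅ ≠ S ⊆ [n]} f(S | p)`. -/
noncomputable def fstarQ {n m : ℕ} (p : Fin n → Fin m → ℝ) (μ : Fin m → ℝ)
    (lam : Fin n → ℝ) : ℝ :=
  sInf ((fun S => fQ p μ lam S ∅) '' {S : Finset (Fin n) | S.Nonempty})

/-- A nonempty subset is tight if it minimizes `f(· | p)` over all nonempty subsets of `[n]`. -/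
def IsTight {n m : ℕ} (p : Fin n → Fin m → ℝ) (μ : Fin m → ℝ) (lam : Fin n → ℝ)
    (S : Finset (Fin n)) : Prop :=
  S.Nonempty ∧ ∀ T : Finset (Fin n), T.Nonempty → fQ p μ lam S ∅ ≤ fQ p μ lam T ∅

/-- `T` is a level subset at the next level, given that `W` is the union of all level
subsets at the previous levels: `T` is an inclusion-minimal nonempty subset of `K \ W`
with `f(T | W) = f*`, where `K` is the union of all tight subsets. -/
def IsLevelSet {n m : ℕ} (p : Fin n → Fin m → ℝ) (μ : Fin m → ℝ) (lam : Fin n → ℝ)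
    (W T : Finset (Fin n)) : Prop :=
  T.Nonempty ∧ T ⊆ unionMin p μ lam Finset.univ ∅ \ W ∧
    fQ p μ lam T W = fstarQ p μ lam ∧
    ∀ T' : Finset (Fin n), T'.Nonempty → T' ⊆ T →
      fQ p μ lam T' W = fstarQ p μ lam → T' = T

open scoped Classical in
/-- `levelUnion p μ lam ℓ` is the union of all level subsets at levels `≤ ℓ`
in the level partition of the union `K` of all tight subsets. -/
noncomputable def levelUnion {n m : ℕ} (p : Fin n → Fin m → ℝ) (μ : Fin m → ℝ)
    (lam : Fin n → ℝ) : ℕ → Finset (Fin n)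
  | 0 => ∅
  | ℓ + 1 =>
    levelUnion p μ lam ℓ ∪
      Finset.univ.powerset.sup fun T =>
        if IsLevelSet p μ lam (levelUnion p μ lam ℓ) T then T else ∅

section Geom

open Finset

lemma geom_prefix (q : ℝ) (hq0 : 0 ≤ q) (hq1 : q ≤ 1) {s N : ℕ} (hs : 1 ≤ s) (hsN : s ≤ N) :
    (s : ℝ) * (1 - q ^ N) ≤ (N : ℝ) * (1 - q ^ s) := by
  have eN : 1 - q ^ N = (1 - q) * ∑ i ∈ Finset.range N, q ^ i := by
    linear_combination geom_sum_mul q N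
  have es : 1 - q ^ s = (1 - q) * ∑ i ∈ Finset.range s, q ^ i := by
    linear_combination geom_sum_mul q s
  have hsplit : (∑ i ∈ Finset.range s, q ^ i) + ∑ i ∈ Finset.Ico s N, q ^ i
      = ∑ i ∈ Finset.range N, q ^ i := by
    simp only [Finset.range_eq_Ico]
    exact Finset.sum_Ico_consecutive _ (Nat.zero_le s) hsN
  have h1 : ∑ i ∈ Finset.Ico s N, q ^ i ≤ ((N : ℝ) - s) * q ^ (s - 1) := by
    calc ∑ i ∈ Finset.Ico s N, q ^ i ≤ ∑ _i ∈ Finset.Ico s N, q ^ (s - 1) :=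
          Finset.sum_le_sum fun i hi =>
            pow_le_pow_of_le_one hq0 hq1 (by have := (Finset.mem_Ico.1 hi).1; omega)
      _ = ((N : ℝ) - s) * q ^ (s - 1) := by
          rw [Finset.sum_const, Nat.card_Ico, nsmul_eq_mul, Nat.cast_sub hsN]
  have h2 : (s : ℝ) * q ^ (s - 1) ≤ ∑ i ∈ Finset.range s, q ^ i := by
    calc (s : ℝ) * q ^ (s - 1) = ∑ _i ∈ Finset.range s, q ^ (s - 1) := by
          rw [Finset.sum_const, Finset.card_range, nsmul_eq_mul]
      _ ≤ ∑ i ∈ Finset.range s, q ^ i :=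
          Finset.sum_le_sum fun i hi =>
            pow_le_pow_of_le_one hq0 hq1 (by have := Finset.mem_range.1 hi; omega)
  have hs0 : (0 : ℝ) ≤ s := by positivity
  have hNs : (s : ℝ) ≤ N := by exact_mod_cast hsN
  have h4 : (s : ℝ) * ((∑ i ∈ Finset.range s, q ^ i) + ∑ i ∈ Finset.Ico s N, q ^ i)
      = (s : ℝ) * ∑ i ∈ Finset.range N, q ^ i := by rw [hsplit]
  have hkey : (s : ℝ) * ∑ i ∈ Finset.range N, q ^ i
      ≤ (N : ℝ) * ∑ i ∈ Finset.range s, q ^ i := by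
    nlinarith [mul_le_mul_of_nonneg_left h1 hs0,
      mul_le_mul_of_nonneg_left h2 (sub_nonneg.2 hNs), h4]
  have hq' : (0 : ℝ) ≤ 1 - q := sub_nonneg.2 hq1
  rw [eN, es]
  nlinarith [mul_le_mul_of_nonneg_left hkey hq']

lemma geom_suffix (q : ℝ) (hq0 : 0 ≤ q) (hq1 : q ≤ 1) {t N : ℕ} (ht : t ≤ N) :
    (N : ℝ) * (q ^ t - q ^ N) ≤ ((N - t : ℕ) : ℝ) * (1 - q ^ N) := by
  have eN : 1 - q ^ N = (1 - q) * ∑ i ∈ Finset.range N, q ^ i := by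
    linear_combination geom_sum_mul q N
  have et : 1 - q ^ t = (1 - q) * ∑ i ∈ Finset.range t, q ^ i := by
    linear_combination geom_sum_mul q t
  have hsplit : (∑ i ∈ Finset.range t, q ^ i) + ∑ i ∈ Finset.Ico t N, q ^ i
      = ∑ i ∈ Finset.range N, q ^ i := by
    simp only [Finset.range_eq_Ico]
    exact Finset.sum_Ico_consecutive _ (Nat.zero_le t) ht
  have e2 : q ^ t - q ^ N = (1 - q) * ∑ i ∈ Finset.Ico t N, q ^ i := by
    linear_combination eN - et - (1 - q) * hsplit
  have castNt : ((N - t : ℕ) : ℝ) = (N : ℝ) - t := by rw [Nat.cast_sub ht]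
  have hmain : (t : ℝ) * ∑ i ∈ Finset.Ico t N, q ^ i
      ≤ ((N : ℝ) - t) * ∑ i ∈ Finset.range t, q ^ i := by
    rcases Nat.eq_zero_or_pos t with rfl | htpos
    · simp
    · have h1 : ∑ i ∈ Finset.Ico t N, q ^ i ≤ ((N : ℝ) - t) * q ^ (t - 1) := by
        calc ∑ i ∈ Finset.Ico t N, q ^ i ≤ ∑ _i ∈ Finset.Ico t N, q ^ (t - 1) :=
              Finset.sum_le_sum fun i hi =>
                pow_le_pow_of_le_one hq0 hq1 (by have := (Finset.mem_Ico.1 hi).1; omega)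
          _ = ((N : ℝ) - t) * q ^ (t - 1) := by
              rw [Finset.sum_const, Nat.card_Ico, nsmul_eq_mul, Nat.cast_sub ht]
      have h2 : (t : ℝ) * q ^ (t - 1) ≤ ∑ i ∈ Finset.range t, q ^ i := by
        calc (t : ℝ) * q ^ (t - 1) = ∑ _i ∈ Finset.range t, q ^ (t - 1) := by
              rw [Finset.sum_const, Finset.card_range, nsmul_eq_mul]
          _ ≤ ∑ i ∈ Finset.range t, q ^ i :=
              Finset.sum_le_sum fun i hi =>
                pow_le_pow_of_le_one hq0 hq1 (by have := Finset.mem_range.1 hi; omega)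
      have ht0 : (0 : ℝ) ≤ t := by positivity
      have htN : (t : ℝ) ≤ N := by exact_mod_cast ht
      nlinarith [mul_le_mul_of_nonneg_left h1 ht0,
        mul_le_mul_of_nonneg_left h2 (sub_nonneg.2 htN)]
  have hmain2 : (N : ℝ) * ∑ i ∈ Finset.Ico t N, q ^ i
      ≤ ((N : ℝ) - t) * ∑ i ∈ Finset.range N, q ^ i := by
    have h4 : ((N : ℝ) - t) * ((∑ i ∈ Finset.range t, q ^ i) + ∑ i ∈ Finset.Ico t N, q ^ i)
        = ((N : ℝ) - t) * ∑ i ∈ Finset.range N, q ^ i := by rw [hsplit]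
    nlinarith [hmain, h4]
  have hq' : (0 : ℝ) ≤ 1 - q := sub_nonneg.2 hq1
  rw [e2, eN, castNt]
  nlinarith [mul_le_mul_of_nonneg_left hmain2 hq']

end Geom

section UnionMin

open Finset

variable {n m : ℕ}

lemma prod_one_sub_nonneg (p : Fin n → Fin m → ℝ)
    (hp : ∀ i j, 0 ≤ p i j ∧ p i j ≤ 1) (S : Finset (Fin n)) (j : Fin m) :
    0 ≤ ∏ i ∈ S, (1 - p i j) :=
  Finset.prod_nonneg fun i _ => by linarith [(hp i j).2]

lemma prod_one_sub_le_one (p : Fin n → Fin m → ℝ)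
    (hp : ∀ i j, 0 ≤ p i j ∧ p i j ≤ 1) (S : Finset (Fin n)) (j : Fin m) :
    ∏ i ∈ S, (1 - p i j) ≤ 1 :=
  Finset.prod_le_one (fun i _ => by linarith [(hp i j).2]) (fun i _ => by linarith [(hp i j).1])

lemma lamQ_pos (lam : Fin n → ℝ) (hlam : ∀ i, 0 < lam i) (S : Finset (Fin n))
    (hS : S.Nonempty) : 0 < lamQ lam S :=
  Finset.sum_pos (fun i _ => hlam i) hS

lemma alphaQ_nonneg (p : Fin n → Fin m → ℝ) (μ : Fin m → ℝ)
    (hp : ∀ i j, 0 ≤ p i j ∧ p i j ≤ 1) (hμ : ∀ j, 0 ≤ μ j) (S S' : Finset (Fin n)) :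
    0 ≤ alphaQ p μ S S' :=
  Finset.sum_nonneg fun j _ => mul_nonneg
    (mul_nonneg (hμ j) (prod_one_sub_nonneg p hp S' j))
    (by linarith [prod_one_sub_le_one p hp S j])

lemma alphaQ_empty (p : Fin n → Fin m → ℝ) (μ : Fin m → ℝ) (S' : Finset (Fin n)) :
    alphaQ p μ ∅ S' = 0 := by
  simp [alphaQ]

lemma alphaQ_submodular (p : Fin n → Fin m → ℝ) (μ : Fin m → ℝ)
    (hp : ∀ i j, 0 ≤ p i j ∧ p i j ≤ 1) (hμ : ∀ j, 0 ≤ μ j) (A B : Finset (Fin n)) :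
    alphaQ p μ (A ∪ B) ∅ + alphaQ p μ (A ∩ B) ∅ ≤ alphaQ p μ A ∅ + alphaQ p μ B ∅ := by
  classical
  simp only [alphaQ, Finset.prod_empty, mul_one, ← Finset.sum_add_distrib]
  apply Finset.sum_le_sum
  intro j _
  have hA : ∏ i ∈ A, (1 - p i j)
      = (∏ i ∈ A \ B, (1 - p i j)) * ∏ i ∈ A ∩ B, (1 - p i j) := by
    rw [← Finset.prod_union (Finset.disjoint_sdiff_inter A B), Finset.sdiff_union_inter]
  have hU : ∏ i ∈ A ∪ B, (1 - p i j)
      = (∏ i ∈ A \ B, (1 - p i j)) * ∏ i ∈ B, (1 - p i j) := by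
    rw [← Finset.prod_union Finset.sdiff_disjoint, Finset.sdiff_union_self_eq_union]
  have hB : ∏ i ∈ B, (1 - p i j)
      = (∏ i ∈ B \ A, (1 - p i j)) * ∏ i ∈ A ∩ B, (1 - p i j) := by
    rw [Finset.inter_comm A B, ← Finset.prod_union (Finset.disjoint_sdiff_inter B A),
      Finset.sdiff_union_inter]
  set a := ∏ i ∈ A \ B, (1 - p i j) with ha
  set d := ∏ i ∈ B \ A, (1 - p i j) with hd
  set c := ∏ i ∈ A ∩ B, (1 - p i j) with hc
  have ha1 : a ≤ 1 := prod_one_sub_le_one p hp _ j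
  have hd1 : d ≤ 1 := prod_one_sub_le_one p hp _ j
  have hc0 : 0 ≤ c := prod_one_sub_nonneg p hp _ j
  rw [hA, hU, hB]
  have key : 0 ≤ μ j * c * ((1 - a) * (1 - d)) :=
    mul_nonneg (mul_nonneg (hμ j) hc0)
      (mul_nonneg (by linarith) (by linarith))
  nlinarith [key]

lemma union_minimizer (p : Fin n → Fin m → ℝ) (μ : Fin m → ℝ) (lam : Fin n → ℝ)
    (hp : ∀ i j, 0 ≤ p i j ∧ p i j ≤ 1) (hμ : ∀ j, 0 ≤ μ j) (hlam : ∀ i, 0 < lam i)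
    (I A B : Finset (Fin n)) (hAI : A ⊆ I) (hBI : B ⊆ I)
    (hA : A.Nonempty ∧ ∀ T ∈ I.powerset, T.Nonempty → fQ p μ lam A ∅ ≤ fQ p μ lam T ∅)
    (hB : B.Nonempty ∧ ∀ T ∈ I.powerset, T.Nonempty → fQ p μ lam B ∅ ≤ fQ p μ lam T ∅) :
    (A ∪ B).Nonempty ∧
      ∀ T ∈ I.powerset, T.Nonempty → fQ p μ lam (A ∪ B) ∅ ≤ fQ p μ lam T ∅ := by
  classical
  refine ⟨hA.1.mono Finset.subset_union_left, ?_⟩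
  set mv := fQ p μ lam A ∅ with hmv
  have hlA : 0 < lamQ lam A := lamQ_pos lam hlam A hA.1
  have hlB : 0 < lamQ lam B := lamQ_pos lam hlam B hB.1
  have hlU : 0 < lamQ lam (A ∪ B) :=
    lamQ_pos lam hlam _ (hA.1.mono Finset.subset_union_left)
  have hfB : fQ p μ lam B ∅ = mv :=
    le_antisymm (hB.2 A (Finset.mem_powerset.2 hAI) hA.1)
      (hA.2 B (Finset.mem_powerset.2 hBI) hB.1)
  have haA : alphaQ p μ A ∅ = mv * lamQ lam A := by
    rw [hmv, fQ, div_mul_cancel₀ _ (ne_of_gt hlA)]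
  have haB : alphaQ p μ B ∅ = mv * lamQ lam B := by
    rw [← hfB, fQ, div_mul_cancel₀ _ (ne_of_gt hlB)]
  have hmv0 : 0 ≤ mv := by
    rw [hmv, fQ]
    exact div_nonneg (alphaQ_nonneg p μ hp hμ A ∅) (le_of_lt hlA)
  have haI : mv * lamQ lam (A ∩ B) ≤ alphaQ p μ (A ∩ B) ∅ := by
    rcases (A ∩ B).eq_empty_or_nonempty with he | hne
    · rw [he, alphaQ_empty]
      simp [lamQ]
    · have h1 : mv ≤ fQ p μ lam (A ∩ B) ∅ :=
        hA.2 (A ∩ B) (Finset.mem_powerset.2 (Finset.inter_subset_left.trans hAI)) hne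
      have hl : 0 < lamQ lam (A ∩ B) := lamQ_pos lam hlam _ hne
      rw [fQ, le_div_iff₀ hl] at h1
      exact h1
  have hsum : lamQ lam (A ∪ B) + lamQ lam (A ∩ B) = lamQ lam A + lamQ lam B :=
    Finset.sum_union_inter
  have hsub := alphaQ_submodular p μ hp hμ A B
  have hfU : fQ p μ lam (A ∪ B) ∅ ≤ mv := by
    rw [fQ, div_le_iff₀ hlU]
    nlinarith [hsub, haI, haA, haB, hsum]
  intro T hT hTne
  exact hfU.trans (hA.2 T hT hTne)

lemma unionMin_spec (p : Fin n → Fin m → ℝ) (μ : Fin m → ℝ) (lam : Fin n → ℝ)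
    (hp : ∀ i j, 0 ≤ p i j ∧ p i j ≤ 1) (hμ : ∀ j, 0 ≤ μ j) (hlam : ∀ i, 0 < lam i)
    (I : Finset (Fin n)) (hI : I.Nonempty) :
    (unionMin p μ lam I ∅).Nonempty ∧ unionMin p μ lam I ∅ ⊆ I ∧
      ∀ T ∈ I.powerset, T.Nonempty →
        fQ p μ lam (unionMin p μ lam I ∅) ∅ ≤ fQ p μ lam T ∅ := by
  classical
  obtain ⟨S0, hS0mem, hS0min⟩ := Finset.exists_min_image
    (I.powerset.filter Finset.Nonempty) (fun S => fQ p μ lam S ∅)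
    ⟨I, Finset.mem_filter.2 ⟨Finset.mem_powerset_self I, hI⟩⟩
  have hS0I : S0 ⊆ I := Finset.mem_powerset.1 (Finset.mem_filter.1 hS0mem).1
  have hS0ne : S0.Nonempty := (Finset.mem_filter.1 hS0mem).2
  have hS0cond : S0.Nonempty ∧
      ∀ T ∈ I.powerset, T.Nonempty → fQ p μ lam S0 ∅ ≤ fQ p μ lam T ∅ :=
    ⟨hS0ne, fun T hT hTne => hS0min T (Finset.mem_filter.2 ⟨hT, hTne⟩)⟩
  have hsup : unionMin p μ lam I ∅ ⊆ I ∧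
      (unionMin p μ lam I ∅ = ∅ ∨ ((unionMin p μ lam I ∅).Nonempty ∧
        ∀ T ∈ I.powerset, T.Nonempty →
          fQ p μ lam (unionMin p μ lam I ∅) ∅ ≤ fQ p μ lam T ∅)) := by
    unfold unionMin
    apply Finset.sup_induction (p := fun U => U ⊆ I ∧ (U = ∅ ∨ (U.Nonempty ∧
      ∀ T ∈ I.powerset, T.Nonempty → fQ p μ lam U ∅ ≤ fQ p μ lam T ∅)))
    · exact ⟨Finset.empty_subset I, Or.inl rfl⟩
    · rintro A ⟨hAI, hA⟩ B ⟨hBI, hB⟩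
      rcases hA with rfl | hA
      · rw [show (∅ ⊔ B : Finset (Fin n)) = B from bot_sup_eq B]
        exact ⟨hBI, hB⟩
      rcases hB with rfl | hB
      · rw [show (A ⊔ ∅ : Finset (Fin n)) = A from sup_bot_eq A]
        exact ⟨hAI, Or.inr hA⟩
      exact ⟨Finset.union_subset hAI hBI,
        Or.inr (union_minimizer p μ lam hp hμ hlam I A B hAI hBI hA hB)⟩
    · intro S hS
      split_ifs with h
      · exact ⟨Finset.mem_powerset.1 hS, Or.inr h⟩
      · exact ⟨Finset.empty_subset I, Or.inl rfl⟩
  have hge : S0 ⊆ unionMin p μ lam I ∅ := by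
    intro x hx
    rw [unionMin, Finset.mem_sup]
    refine ⟨S0, Finset.mem_powerset.2 hS0I, ?_⟩
    beta_reduce
    split_ifs
    · exact hx
  rcases hsup.2 with he | hgood
  · rw [he] at hge
    exact absurd (Finset.subset_empty.1 hge) (Finset.nonempty_iff_ne_empty.1 hS0ne)
  · exact ⟨hgood.1, hsup.1, hgood.2⟩

lemma rateAux_nonneg (lam : Fin n → ℝ) (p : Fin n → Fin m → ℝ)
    (hp : ∀ i j, 0 ≤ p i j ∧ p i j ≤ 1) (hlam : ∀ i, 0 < lam i) :
    ∀ (fuel : ℕ) (I : Finset (Fin n)) (μc : Fin m → ℝ), (∀ j, 0 ≤ μc j) →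
      ∀ i, 0 ≤ rateAux lam p fuel I μc i := by
  intro fuel
  induction fuel with
  | zero => intro I μc hμc i; rw [rateAux]
  | succ fuel ih =>
    intro I μc hμc i
    rw [rateAux]
    split_ifs with h1 h2
    · exact le_rfl
    · push_neg at h1
      obtain ⟨S, hSmem, hSne, hSlt⟩ := h1
      have hIne : I.Nonempty := hSne.mono (Finset.mem_powerset.1 hSmem)
      obtain ⟨hne, hsub, hmin⟩ := unionMin_spec p μc lam hp hμc hlam I hIne
      have := hmin S hSmem hSne
      simp only [topSet]
      linarith
    · exact ih _ _ (fun j => mul_nonneg (hμc j) (prod_one_sub_nonneg p hp _ j)) i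

end UnionMin

section Symmetric

open Finset

lemma prod_update_not_mem {n : ℕ} (i0 : Fin n) (qv : Fin n → ℝ) (S : Finset (Fin n))
    (hS : i0 ∉ S) (j : Fin n) :
    ∏ r ∈ S, (1 - Function.update (fun _ _ => 1 / (n : ℝ)) i0 qv r j)
      = (1 - 1 / (n : ℝ)) ^ S.card := by
  rw [Finset.prod_congr rfl (fun r hr => ?_), Finset.prod_const]
  rw [Function.update_of_ne (by rintro rfl; exact hS hr)]

lemma prod_update_mem {n : ℕ} (i0 : Fin n) (qv : Fin n → ℝ) (S : Finset (Fin n))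
    (hS : i0 ∈ S) (j : Fin n) :
    ∏ r ∈ S, (1 - Function.update (fun _ _ => 1 / (n : ℝ)) i0 qv r j)
      = (1 - qv j) * (1 - 1 / (n : ℝ)) ^ (S.card - 1) := by
  rw [← Finset.mul_prod_erase S _ hS, Function.update_self]
  congr 1
  rw [Finset.prod_congr rfl (fun r hr => ?_), Finset.prod_const, Finset.card_erase_of_mem hS]
  rw [Function.update_of_ne (Finset.ne_of_mem_erase hr)]

lemma alpha_update {n : ℕ} (hn : 1 ≤ n) (i0 : Fin n) (qv : Fin n → ℝ)
    (hqs : ∑ j, qv j = 1) (c : ℝ) (I : Finset (Fin n)) (hi : i0 ∈ I) :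
    alphaQ (Function.update (fun _ _ => 1 / (n : ℝ)) i0 qv) (fun _ => c) I ∅
      = (n : ℝ) * c * (1 - (1 - 1 / (n : ℝ)) ^ I.card) := by
  have hn0 : (n : ℝ) ≠ 0 := Nat.cast_ne_zero.2 (by omega)
  obtain ⟨s, hs⟩ : ∃ s, I.card = s + 1 :=
    ⟨I.card - 1, by have := Finset.card_pos.2 ⟨i0, hi⟩; omega⟩
  simp only [alphaQ, Finset.prod_empty, mul_one]
  have hterm : ∀ j ∈ (Finset.univ : Finset (Fin n)),
      c * (1 - ∏ r ∈ I, (1 - Function.update (fun _ _ => 1 / (n : ℝ)) i0 qv r j))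
        = c - c * (1 - 1 / (n : ℝ)) ^ s * (1 - qv j) := by
    intro j _
    rw [prod_update_mem i0 qv I hi j, hs, Nat.add_sub_cancel]
    ring
  rw [Finset.sum_congr rfl hterm, Finset.sum_sub_distrib, Finset.sum_const,
    ← Finset.mul_sum, Finset.sum_sub_distrib, Finset.sum_const, hqs,
    Finset.card_univ, Fintype.card_fin, nsmul_eq_mul, nsmul_eq_mul, hs, pow_succ]
  have hkey : (n : ℝ) * (1 - 1 / n) = n - 1 := by field_simp
  linear_combination c * (1 - 1 / (n : ℝ)) ^ s * hkey

lemma alpha_uniform {n : ℕ} (hn : 1 ≤ n) (c : ℝ) (S : Finset (Fin n)) (hS : S.Nonempty) :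
    alphaQ (fun _ _ => 1 / (n : ℝ) : Fin n → Fin n → ℝ) (fun _ => c) S ∅
      = (n : ℝ) * c * (1 - (1 - 1 / (n : ℝ)) ^ S.card) := by
  obtain ⟨i0, hi0⟩ := hS
  have h := alpha_update hn i0 (fun _ => 1 / (n : ℝ))
    (by rw [Finset.sum_const, Finset.card_univ, Fintype.card_fin, nsmul_eq_mul]
        field_simp) c S hi0
  rwa [show Function.update (fun _ _ => 1 / (n : ℝ)) i0 (fun _ => 1 / (n : ℝ))
    = (fun _ _ => 1 / (n : ℝ)) from Function.update_eq_self i0 _] at h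

lemma lamQ_const {n : ℕ} (lam0 : ℝ) (S : Finset (Fin n)) :
    lamQ (fun _ => lam0) S = (S.card : ℝ) * lam0 := by
  rw [lamQ, Finset.sum_const, nsmul_eq_mul]

lemma fQ_uniform {n : ℕ} (hn : 1 ≤ n) (lam0 : ℝ) (S : Finset (Fin n)) (hS : S.Nonempty) :
    fQ (fun _ _ => 1 / (n : ℝ) : Fin n → Fin n → ℝ) (fun _ => (1 : ℝ)) (fun _ => lam0) S ∅
      = (n : ℝ) * (1 - (1 - 1 / (n : ℝ)) ^ S.card) / ((S.card : ℝ) * lam0) := by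
  rw [fQ, alpha_uniform hn 1 S hS, lamQ_const, mul_one]

lemma fQ_update {n : ℕ} (hn : 1 ≤ n) (lam0 : ℝ) (i0 : Fin n) (qv : Fin n → ℝ)
    (hqs : ∑ j, qv j = 1) (c : ℝ) (I : Finset (Fin n)) (hi : i0 ∈ I) :
    fQ (Function.update (fun _ _ => 1 / (n : ℝ)) i0 qv) (fun _ => c) (fun _ => lam0) I ∅
      = (n : ℝ) * c * (1 - (1 - 1 / (n : ℝ)) ^ I.card) / ((I.card : ℝ) * lam0) := by
  rw [fQ, alpha_update hn i0 qv hqs c I hi, lamQ_const]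

lemma fI_le_fstar {n : ℕ} (hn : 1 ≤ n) (lam0 : ℝ) (h0 : 0 < lam0) (i0 : Fin n)
    (qv : Fin n → ℝ) (hqs : ∑ j, qv j = 1) (T : Finset (Fin n)) (hT : i0 ∉ T) :
    fQ (Function.update (fun _ _ => 1 / (n : ℝ)) i0 qv)
        (fun _ => (1 - 1 / (n : ℝ)) ^ T.card) (fun _ => lam0)
        (Finset.univ \ T) ∅
      ≤ (1 - (1 - 1 / (n : ℝ)) ^ n) / lam0 := by
  have hn1 : (1 : ℝ) ≤ (n : ℝ) := by exact_mod_cast hn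
  have h1n : 0 < 1 / (n : ℝ) := by positivity
  have h1n1 : 1 / (n : ℝ) ≤ 1 := by rw [div_le_one (by linarith)]; exact hn1
  have hi : i0 ∈ Finset.univ \ T := Finset.mem_sdiff.2 ⟨Finset.mem_univ _, hT⟩
  have hcard : (Finset.univ \ T).card = n - T.card := by
    rw [Finset.card_sdiff_of_subset (Finset.subset_univ T), Finset.card_univ, Fintype.card_fin]
  have htn : T.card ≤ n := by simpa using Finset.card_le_univ T
  have hs1 : 1 ≤ (Finset.univ \ T).card := Finset.card_pos.2 ⟨i0, hi⟩
  rw [fQ_update hn lam0 i0 qv hqs _ _ hi]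
  rw [div_le_div_iff₀ (by positivity) h0]
  set q : ℝ := 1 - 1 / (n : ℝ) with hqdef
  have hq0 : 0 ≤ q := by rw [hqdef]; linarith
  have hq1 : q ≤ 1 := by rw [hqdef]; linarith
  set s : ℕ := (Finset.univ \ T).card with hsdef
  have hts : T.card + s = n := by omega
  have hqpow : q ^ T.card * q ^ s = q ^ n := by rw [← pow_add, hts]
  have hqpow2 : (n : ℝ) * lam0 * (q ^ T.card * q ^ s) = (n : ℝ) * lam0 * q ^ n := by
    rw [hqpow]
  have geom := geom_suffix q hq0 hq1 htn
  have hcast : ((n - T.card : ℕ) : ℝ) = (s : ℕ) := by rw [← hcard]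
  rw [hcast] at geom
  have hs0 : (0 : ℝ) ≤ s := by positivity
  nlinarith [mul_le_mul_of_nonneg_right geom (le_of_lt h0), hqpow2]

end Symmetric

section Nash

open Finset

lemma update_bounds {n : ℕ} (hn : 1 ≤ n) (i0 : Fin n) (qv : Fin n → ℝ)
    (hq : inSimplex qv) :
    ∀ i j, 0 ≤ Function.update (fun _ _ => 1 / (n : ℝ)) i0 qv i j ∧
      Function.update (fun _ _ => 1 / (n : ℝ)) i0 qv i j ≤ 1 := by
  intro i j
  have hn1 : (1 : ℝ) ≤ (n : ℝ) := by exact_mod_cast hn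
  rcases eq_or_ne i i0 with rfl | hne
  · rw [Function.update_self]
    refine ⟨hq.1 j, ?_⟩
    calc qv j ≤ ∑ k, qv k := Finset.single_le_sum (fun k _ => hq.1 k) (Finset.mem_univ j)
      _ = 1 := hq.2
  · rw [Function.update_of_ne hne]
    constructor
    · positivity
    · rw [div_le_one (by linarith)]; exact hn1

lemma nash_aux {n : ℕ} (hn : 1 ≤ n) (lam0 : ℝ) (h0 : 0 < lam0) (i0 : Fin n)
    (qv : Fin n → ℝ) (hq : inSimplex qv) :
    ∀ (fuel : ℕ) (T : Finset (Fin n)), i0 ∉ T → (Finset.univ \ T).card ≤ fuel →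
      1 - (1 - (1 - 1 / (n : ℝ)) ^ n) / lam0 ≤
        rateAux (fun _ => lam0) (Function.update (fun _ _ => 1 / (n : ℝ)) i0 qv) fuel
          (Finset.univ \ T) (fun _ => (1 - 1 / (n : ℝ)) ^ T.card) i0 := by
  have hn1 : (1 : ℝ) ≤ (n : ℝ) := by exact_mod_cast hn
  have h1n1 : 1 / (n : ℝ) ≤ 1 := by rw [div_le_one (by linarith)]; exact hn1
  have hq0 : (0 : ℝ) ≤ 1 - 1 / (n : ℝ) := by linarith
  set p' := Function.update (fun _ _ => 1 / (n : ℝ)) i0 qv with hp'def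
  have hp : ∀ i j, 0 ≤ p' i j ∧ p' i j ≤ 1 := update_bounds hn i0 qv hq
  have hlam : ∀ i : Fin n, 0 < (fun _ => lam0) i := fun _ => h0
  intro fuel
  induction fuel with
  | zero =>
    intro T hT hfuel
    have hi : i0 ∈ Finset.univ \ T := Finset.mem_sdiff.2 ⟨Finset.mem_univ _, hT⟩
    have := Finset.card_pos.2 ⟨i0, hi⟩
    omega
  | succ fuel ih =>
    intro T hT hfuel
    have hi : i0 ∈ Finset.univ \ T := Finset.mem_sdiff.2 ⟨Finset.mem_univ _, hT⟩
    have hIne : (Finset.univ \ T).Nonempty := ⟨i0, hi⟩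
    have hμc : ∀ j : Fin n, 0 ≤ (fun _ : Fin n => (1 - 1 / (n : ℝ)) ^ T.card) j :=
      fun _ => pow_nonneg hq0 _
    have hfI : fQ p' (fun _ => (1 - 1 / (n : ℝ)) ^ T.card) (fun _ => lam0)
        (Finset.univ \ T) ∅ ≤ (1 - (1 - 1 / (n : ℝ)) ^ n) / lam0 :=
      fI_le_fstar hn lam0 h0 i0 qv hq.2 T hT
    obtain ⟨htsne, htssub, htsmin⟩ :=
      unionMin_spec p' (fun _ => (1 - 1 / (n : ℝ)) ^ T.card) (fun _ => lam0)
        hp hμc hlam (Finset.univ \ T) hIne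
    rw [rateAux]
    simp only [topSet]
    split_ifs with h1 h2
    · have := h1 _ (Finset.mem_powerset_self _) hIne
      linarith
    · simp only [h2, ↓reduceIte]
      have := htsmin _ (Finset.mem_powerset_self _) hIne
      linarith
    · set ts := unionMin p' (fun _ => (1 - 1 / (n : ℝ)) ^ T.card) (fun _ => lam0)
        (Finset.univ \ T) ∅ with htsdef
      have hdisj : Disjoint T ts := by
        rw [Finset.disjoint_left]
        intro x hxT hxts
        exact (Finset.mem_sdiff.1 (htssub hxts)).2 hxT
      have hIeq : (Finset.univ \ T) \ ts = Finset.univ \ (T ∪ ts) := by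
        ext x
        simp only [Finset.mem_sdiff, Finset.mem_union]
        tauto
      have hμeq : (fun j => (fun _ : Fin n => (1 - 1 / (n : ℝ)) ^ T.card) j *
          ∏ r ∈ ts, (1 - p' r j)) = fun _ : Fin n => (1 - 1 / (n : ℝ)) ^ (T ∪ ts).card := by
        funext j
        rw [hp'def, prod_update_not_mem i0 qv ts h2 j, ← pow_add,
          Finset.card_union_of_disjoint hdisj]
      rw [hIeq, hμeq]
      refine le_trans ?_ (le_of_eq (if_neg (c := i0 ∈ ts) h2).symm)
      apply ih
      · rw [Finset.mem_union]
        rintro (h | h)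
        · exact hT h
        · exact h2 h
      · have hts1 : 1 ≤ ts.card := Finset.card_pos.2 htsne
        have hc : (Finset.univ \ (T ∪ ts)).card = (Finset.univ \ T).card - ts.card := by
          rw [← hIeq, Finset.card_sdiff_of_subset htssub]
        omega

end Nash


/-- **Tightness of the `e/(e-1)` bound: the symmetric instance.** With `n = m ≥ 1`
servers of rate `1`, all arrival rates equal to `λ ∈ (0,1)`, and the uniform profile
`p_{ij} = 1/n`: the whole set `[n]` is the unique largest-cardinality minimizer of
`f(· | p)` (it is a minimizer and equals the union of all minimizers), with
`f([n] | p) = (1 - (1 - 1/n)^n)/λ`; the uniform profile is a Nash equilibrium; every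
queue has cost `r_i(p) = max {0, 1 - (1 - (1 - 1/n)^n)/λ}`; and in particular if
`λ > 1 - (1 - 1/n)^n` then every queue has strictly positive cost. -/
theorem statement19 {n : ℕ} (hn : 1 ≤ n) (lam0 : ℝ) (hlam0 : 0 < lam0 ∧ lam0 < 1) :
    let lam : Fin n → ℝ := fun _ => lam0
    let μ : Fin n → ℝ := fun _ => 1
    let p : Fin n → Fin n → ℝ := fun _ _ => 1 / (n : ℝ)
    unionMin p μ lam Finset.univ ∅ = Finset.univ ∧
    (∀ S : Finset (Fin n), S.Nonempty →
      fQ p μ lam Finset.univ ∅ ≤ fQ p μ lam S ∅) ∧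
    fQ p μ lam Finset.univ ∅ = (1 - (1 - 1 / (n : ℝ)) ^ n) / lam0 ∧
    (∀ (i : Fin n) (q : Fin n → ℝ), inSimplex q →
      rateQ lam μ p i ≤ rateQ lam μ (Function.update p i q) i) ∧
    (∀ i : Fin n, rateQ lam μ p i = max 0 (1 - (1 - (1 - 1 / (n : ℝ)) ^ n) / lam0)) ∧
    (1 - (1 - 1 / (n : ℝ)) ^ n < lam0 → ∀ i : Fin n, 0 < rateQ lam μ p i) := by
  
  intro lam μ p
  obtain ⟨h0, _h1⟩ := hlam0
  have hn1 : (1 : ℝ) ≤ (n : ℝ) := by exact_mod_cast hn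
  have hnpos : (0 : ℝ) < (n : ℝ) := by linarith
  have hn0 : (n : ℝ) ≠ 0 := ne_of_gt hnpos
  have h1n1 : 1 / (n : ℝ) ≤ 1 := by rw [div_le_one hnpos]; exact hn1
  have h1n0 : (0 : ℝ) < 1 / (n : ℝ) := by positivity
  have hq0 : (0 : ℝ) ≤ 1 - 1 / (n : ℝ) := by linarith
  have hq1 : (1 - 1 / (n : ℝ)) ≤ 1 := by linarith
  have huniv_ne : (Finset.univ : Finset (Fin n)).Nonempty :=
    ⟨⟨0, by omega⟩, Finset.mem_univ _⟩
  have hcardu : (Finset.univ : Finset (Fin n)).card = n := by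
    rw [Finset.card_univ, Fintype.card_fin]
  -- Claim 2
  have hmin : ∀ S : Finset (Fin n), S.Nonempty →
      fQ p μ lam Finset.univ ∅ ≤ fQ p μ lam S ∅ := by
    intro S hS
    show fQ (fun _ _ => 1 / (n : ℝ) : Fin n → Fin n → ℝ) (fun _ => (1 : ℝ))
        (fun _ => lam0) Finset.univ ∅
      ≤ fQ (fun _ _ => 1 / (n : ℝ) : Fin n → Fin n → ℝ) (fun _ => (1 : ℝ))
        (fun _ => lam0) S ∅
    rw [fQ_uniform hn lam0 _ huniv_ne, fQ_uniform hn lam0 S hS, hcardu]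
    have hs1 : 1 ≤ S.card := Finset.card_pos.2 hS
    have hsn : S.card ≤ n := by simpa using Finset.card_le_univ S
    have hs0 : (0 : ℝ) < S.card := by exact_mod_cast hs1
    rw [div_le_div_iff₀ (mul_pos hnpos h0) (mul_pos hs0 h0)]
    have geom := geom_prefix (1 - 1 / (n : ℝ)) hq0 hq1 hs1 hsn
    nlinarith [mul_le_mul_of_nonneg_right geom (mul_nonneg (le_of_lt hnpos) (le_of_lt h0))]
  -- Claim 3
  have hfuniv : fQ p μ lam Finset.univ ∅ = (1 - (1 - 1 / (n : ℝ)) ^ n) / lam0 := by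
    show fQ (fun _ _ => 1 / (n : ℝ) : Fin n → Fin n → ℝ) (fun _ => (1 : ℝ))
        (fun _ => lam0) Finset.univ ∅ = _
    rw [fQ_uniform hn lam0 _ huniv_ne, hcardu, mul_div_mul_left _ _ hn0]
  -- Claim 1
  have hclaim1 : unionMin p μ lam Finset.univ ∅ = Finset.univ := by
    refine Finset.Subset.antisymm (Finset.subset_univ _) ?_
    have hcond : (Finset.univ : Finset (Fin n)).Nonempty ∧
        ∀ T ∈ (Finset.univ : Finset (Fin n)).powerset, T.Nonempty →
          fQ p μ lam Finset.univ ∅ ≤ fQ p μ lam T ∅ :=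
      ⟨huniv_ne, fun T _ hT => hmin T hT⟩
    intro x hx
    rw [unionMin, Finset.mem_sup]
    refine ⟨Finset.univ, Finset.mem_powerset_self _, ?_⟩
    beta_reduce
    split_ifs
    · exact hx
  -- Claim 5
  have hrate : ∀ i : Fin n,
      rateQ lam μ p i = max 0 (1 - (1 - (1 - 1 / (n : ℝ)) ^ n) / lam0) := by
    intro i
    show rateAux lam p (n + 1) Finset.univ μ i = _
    rw [rateAux]
    by_cases hF : 1 ≤ (1 - (1 - 1 / (n : ℝ)) ^ n) / lam0
    · rw [if_pos, max_eq_left (by linarith)]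
      intro S hS hSne
      have := hmin S hSne
      rw [hfuniv] at this
      linarith
    · push_neg at hF
      have hC1 : ¬(∀ S ∈ (Finset.univ : Finset (Fin n)).powerset, S.Nonempty →
          1 ≤ fQ p μ lam S ∅) := by
        intro h
        have := h Finset.univ (Finset.mem_powerset_self _) huniv_ne
        rw [hfuniv] at this
        linarith
      have htop : topSet p μ lam Finset.univ = Finset.univ := hclaim1
      rw [if_neg hC1, htop, if_pos (Finset.mem_univ i), hfuniv,
        max_eq_right (by linarith)]
  refine ⟨hclaim1, hmin, hfuniv, ?_, hrate, ?_⟩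
  · -- Nash equilibrium
    intro i qv hq
    rw [hrate i]
    by_cases hF : 1 ≤ (1 - (1 - 1 / (n : ℝ)) ^ n) / lam0
    · rw [max_eq_left (by linarith)]
      exact rateAux_nonneg lam (Function.update p i qv) (update_bounds hn i qv hq)
        (fun _ => h0) (n + 1) Finset.univ μ (fun _ => zero_le_one) i
    · push_neg at hF
      rw [max_eq_right (by linarith)]
      have h := nash_aux hn lam0 h0 i qv hq (n + 1) ∅ (Finset.notMem_empty i)
        (by rw [Finset.sdiff_empty, Finset.card_univ, Fintype.card_fin]; omega)
      simp only [Finset.sdiff_empty, Finset.card_empty, pow_zero] at h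
      exact h
  · -- positive cost
    intro hgt i
    rw [hrate i]
    have hFlt : (1 - (1 - 1 / (n : ℝ)) ^ n) / lam0 < 1 := by
      rw [div_lt_one h0]; linarith
    exact lt_max_of_lt_right (by linarith)
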